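/- Let $u : N \to M$ be an injective homomorphism of finitely generated free modules over a discrete valuation ring $\mathcal{O}$ with uniformizer $\varpi$. Define $u(N)^{\mathrm{sat}} = (u(N) \otimes_{\mathcal{O}} E) \cap M$, where $E$ is the fraction field. Then for all sufficiently large positive integers $s$, there is an isomorphism of $\mathcal{O}$-modules $u(N)^{\mathrm{sat}}/u(N) \cong \ker(u \otimes 1 : N \otimes \mathcal{O}/\varpi^s \to M \otimes \mathcal{O}/\varpi^s)$. -/

import Mathlib

open TensorProduct

/-- The saturation of a submodule `N'` of `M` with respect to the uniformizer `ϖ`: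
the set of `m ∈ M` with `ϖ^k • m ∈ N'` for some `k ≥ 0`.  (Over a discrete valuation
ring with uniformizer `ϖ` this agrees with `(N' ⊗ E) ∩ M`.) -/
def satur {O M : Type} [CommRing O] [AddCommGroup M] [Module O M]
    (ϖ : O) (N' : Submodule O M) : Submodule O M where
  carrier := {m | ∃ k : ℕ, ϖ ^ k • m ∈ N'}
  zero_mem' := ⟨0, by simp⟩
  add_mem' := by
    rintro a b ⟨k, hk⟩ ⟨l, hl⟩
    exact ⟨k + l, by
      rw [smul_add, pow_add]
      exact add_mem (by rw [mul_comm, mul_smul]; exact N'.smul_mem _ hk)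
        (by rw [mul_smul]; exact N'.smul_mem _ hl)⟩
  smul_mem' := by
    rintro c a ⟨k, hk⟩
    exact ⟨k, by rw [smul_comm]; exact N'.smul_mem _ hk⟩

/-- `span {r} • ⊤` is the range of multiplication by `r`. -/
lemma span_smul_top_eq_range {O M : Type} [CommRing O] [AddCommGroup M] [Module O M]
    (r : O) :
    (Ideal.span {r} : Ideal O) • (⊤ : Submodule O M) =
      LinearMap.range (LinearMap.lsmul O M r) := by
  apply le_antisymm
  · rw [Submodule.smul_le]
    rintro a ha m -
    rw [Ideal.mem_span_singleton] at ha
    obtain ⟨c, rfl⟩ := ha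
    exact ⟨c • m, by simp [mul_comm r c, mul_smul]⟩
  · rintro x ⟨m, rfl⟩
    exact Submodule.smul_mem_smul (Ideal.mem_span_singleton_self r) trivial

/-- Bellaïche–Graftieaux, Lemme 4.1.1. Let `u : N → M` be an injective map
of finitely generated free modules over a discrete valuation ring `O` with uniformizer `ϖ`.
Then for all sufficiently large `s` there is an isomorphism of `O`-modules
`u(N)^sat / u(N) ≅ ker (u ⊗ 1 : N ⊗ O/ϖ^s → M ⊗ O/ϖ^s)`. -/
theorem saturation_quotient_iso_ker_tensor
    (O : Type) [CommRing O] [IsDomain O] [IsDiscreteValuationRing O]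
    (ϖ : O) (hϖ : Irreducible ϖ)
    (N M : Type) [AddCommGroup N] [AddCommGroup M] [Module O N] [Module O M]
    [Module.Free O N] [Module.Finite O N] [Module.Free O M] [Module.Finite O M]
    (u : N →ₗ[O] M) (hu : Function.Injective u) :
    ∃ s₀ : ℕ, ∀ s : ℕ, s₀ ≤ s →
      Nonempty
        ((↥(satur ϖ (LinearMap.range u)) ⧸
            (LinearMap.range u).comap (satur ϖ (LinearMap.range u)).subtype) ≃ₗ[O]
          ↥(LinearMap.ker
            (LinearMap.rTensor (O ⧸ Ideal.span {ϖ ^ s}) u :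
              N ⊗[O] (O ⧸ Ideal.span {ϖ ^ s}) →ₗ[O] M ⊗[O] (O ⧸ Ideal.span {ϖ ^ s})))) := by
  classical
  set R := LinearMap.range u with hR
  set sat := satur ϖ R with hsat
  -- the cokernel
  set C := M ⧸ R
  set π : M →ₗ[O] C := R.mkQ with hπ
  -- the map from the saturation to the cokernel
  set g : sat →ₗ[O] C := π ∘ₗ sat.subtype with hg
  have hkerg : LinearMap.ker g = R.comap sat.subtype := by
    rw [hg, LinearMap.ker_comp, hπ, Submodule.ker_mkQ]
  -- the range of g is a finitely generated torsion module
  set S := LinearMap.range g with hS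
  have hSfg : S.FG := IsNoetherian.noetherian S
  obtain ⟨t, ht⟩ := hSfg
  -- every element of S is killed by some power of ϖ
  have htors : ∀ x : C, x ∈ S → ∃ j : ℕ, ϖ ^ j • x = 0 := by
    rintro x ⟨y, rfl⟩
    obtain ⟨j, hj⟩ := y.2
    refine ⟨j, ?_⟩
    have : g (ϖ ^ j • y) = ϖ ^ j • g y := map_smul g _ _
    rw [← this]
    show π (ϖ ^ j • (y : M)) = 0
    rw [hπ, Submodule.mkQ_apply, Submodule.Quotient.mk_eq_zero]
    exact hj
  choose k hk using fun x : {x : C // x ∈ t} =>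
    htors x.1 (ht ▸ Submodule.subset_span x.2)
  refine ⟨t.attach.sup k, fun s hs => ?_⟩
  -- for s ≥ s₀, S equals the ϖ^s-torsion of C
  have hStors : S = Submodule.torsionBy O C (ϖ ^ s) := by
    apply le_antisymm
    · rw [← ht, Submodule.span_le]
      intro x hx
      rw [SetLike.mem_coe, Submodule.mem_torsionBy_iff]
      have hle : k ⟨x, hx⟩ ≤ s := le_trans (Finset.le_sup (t.mem_attach ⟨x, hx⟩)) hs
      calc ϖ ^ s • x = ϖ ^ (s - k ⟨x, hx⟩) • ϖ ^ (k ⟨x, hx⟩) • x := by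
            rw [← mul_smul, ← pow_add, Nat.sub_add_cancel hle]
        _ = 0 := by rw [hk ⟨x, hx⟩, smul_zero]
    · intro x hx
      rw [Submodule.mem_torsionBy_iff] at hx
      obtain ⟨m, rfl⟩ := Submodule.mkQ_surjective R x
      have hmem : ϖ ^ s • m ∈ R := by
        rwa [← map_smul, Submodule.mkQ_apply, Submodule.Quotient.mk_eq_zero] at hx
      exact ⟨⟨m, ⟨s, hmem⟩⟩, rfl⟩
  -- the first equivalence: sat / R ≃ S = torsion
  have e1 : (↥sat ⧸ R.comap sat.subtype) ≃ₗ[O] ↥(Submodule.torsionBy O C (ϖ ^ s)) :=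
    (Submodule.quotEquivOfEq _ _ hkerg.symm).trans
      ((LinearMap.quotKerEquivRange g).trans (LinearEquiv.ofEq _ _ hStors))
  -- now the tensor side
  set I : Ideal O := Ideal.span {ϖ ^ s} with hI
  set pN : Submodule O N := I • ⊤ with hpN
  set pM : Submodule O M := I • ⊤ with hpM
  have hrangeN : pN = LinearMap.range (LinearMap.lsmul O N (ϖ ^ s)) :=
    span_smul_top_eq_range _
  have hrangeM : pM = LinearMap.range (LinearMap.lsmul O M (ϖ ^ s)) :=
    span_smul_top_eq_range _
  have hle : pN ≤ pM.comap u := by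
    rw [hrangeN]
    rintro x ⟨n, rfl⟩
    rw [Submodule.mem_comap, hrangeM]
    exact ⟨u n, by simp⟩
  set v : (N ⧸ pN) →ₗ[O] (M ⧸ pM) := Submodule.mapQ pN pM u hle with hv
  set eN := tensorQuotEquivQuotSMul N I
  set eM := tensorQuotEquivQuotSMul M I
  -- the commuting square
  have hsq : (eM : M ⊗[O] (O ⧸ I) →ₗ[O] M ⧸ pM) ∘ₗ LinearMap.rTensor (O ⧸ I) u =
      v ∘ₗ (eN : N ⊗[O] (O ⧸ I) →ₗ[O] N ⧸ pN) := by
    apply TensorProduct.ext'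
    intro n q
    obtain ⟨r, rfl⟩ := Ideal.Quotient.mk_surjective q
    simp only [LinearMap.comp_apply, LinearEquiv.coe_coe, LinearMap.rTensor_tmul]
    rw [show eM (u n ⊗ₜ[O] Ideal.Quotient.mk I r) = Submodule.Quotient.mk (r • u n) from
      tensorQuotEquivQuotSMul_tmul_mk I (u n) r,
      show eN (n ⊗ₜ[O] Ideal.Quotient.mk I r) = Submodule.Quotient.mk (r • n) from
      tensorQuotEquivQuotSMul_tmul_mk I n r, hv, Submodule.mapQ_apply, map_smul]
  have hsq' : ∀ x, eM (LinearMap.rTensor (O ⧸ I) u x) = v (eN x) :=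
    fun x => LinearMap.congr_fun hsq x
  -- transport the kernel along the square
  have hmapker : (LinearMap.ker (LinearMap.rTensor (O ⧸ I) u)).map
      (eN : N ⊗[O] (O ⧸ I) →ₗ[O] N ⧸ pN) = LinearMap.ker v := by
    ext x
    rw [Submodule.mem_map_equiv, LinearMap.mem_ker, LinearMap.mem_ker]
    constructor
    · intro h
      have := hsq' (eN.symm x)
      rwa [h, map_zero, eN.apply_symm_apply, eq_comm] at this
    · intro h
      have := hsq' (eN.symm x)
      rw [eN.apply_symm_apply, h] at this
      exact eM.injective (by rwa [map_zero])
  have e2 : ↥(LinearMap.ker (LinearMap.rTensor (O ⧸ I) u)) ≃ₗ[O] ↥(LinearMap.ker v) :=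
    (eN.submoduleMap _).trans (LinearEquiv.ofEq _ _ hmapker)
  -- snake lemma by hand: ker v ≃ torsionBy ϖ^s C
  set K : Submodule O N := pM.comap u with hK
  set φ : M →ₗ[O] M := LinearMap.lsmul O M (ϖ ^ s) with hφ
  have hφinj : Function.Injective φ := by
    intro a b hab
    exact smul_right_injective M (pow_ne_zero s hϖ.ne_zero) hab
  have hrange : ∀ n : K, u n.1 ∈ LinearMap.range φ := fun n => by
    have h2 : u n.1 ∈ pM := Submodule.mem_comap.mp n.2
    rwa [hrangeM] at h2
  set w : K →ₗ[O] LinearMap.range φ :=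
    LinearMap.codRestrict (LinearMap.range φ) (u ∘ₗ K.subtype) hrange with hw
  set β₀ : K →ₗ[O] C :=
    π ∘ₗ ((LinearEquiv.ofInjective φ hφinj).symm : LinearMap.range φ →ₗ[O] M) ∘ₗ w with hβ₀
  -- key computation for β₀
  have keyβ : ∀ (n : K) (m : M), φ m = u n.1 → β₀ n = π m := by
    intro n m hm
    have : (LinearEquiv.ofInjective φ hφinj).symm (w n) = m := by
      rw [LinearEquiv.symm_apply_eq]
      apply Subtype.ext
      simp [hw, LinearEquiv.ofInjective_apply, hm]
      rfl
    simp [hβ₀, this]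
  have existsm : ∀ n : K, ∃ m : M, φ m = u n.1 := fun n => by
    obtain ⟨m, hm⟩ := hrange n
    exact ⟨m, hm⟩
  -- β₀ lands in the torsion
  have hmemβ : ∀ n : K, β₀ n ∈ Submodule.torsionBy O C (ϖ ^ s) := by
    intro n
    obtain ⟨m, hm⟩ := existsm n
    rw [keyβ n m hm, Submodule.mem_torsionBy_iff, hπ, ← map_smul, Submodule.mkQ_apply,
      Submodule.Quotient.mk_eq_zero]
    show ϖ ^ s • m ∈ R
    have : ϖ ^ s • m = u n.1 := hm
    rw [this]
    exact ⟨n.1, rfl⟩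
  set β : K →ₗ[O] Submodule.torsionBy O C (ϖ ^ s) :=
    LinearMap.codRestrict _ β₀ hmemβ with hβ
  have hsurjβ : Function.Surjective β := by
    rintro ⟨x, hx⟩
    rw [Submodule.mem_torsionBy_iff] at hx
    obtain ⟨m, rfl⟩ := Submodule.mkQ_surjective R x
    have hmem : ϖ ^ s • m ∈ R := by
      rwa [← map_smul, Submodule.mkQ_apply, Submodule.Quotient.mk_eq_zero] at hx
    obtain ⟨n₀, hn₀⟩ := hmem
    have hn₀K : n₀ ∈ K := by
      rw [hK, Submodule.mem_comap, hrangeM]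
      exact ⟨m, hn₀.symm⟩
    refine ⟨⟨n₀, hn₀K⟩, ?_⟩
    apply Subtype.ext
    show β₀ ⟨n₀, hn₀K⟩ = Submodule.mkQ R m
    exact keyβ _ m hn₀.symm
  -- α : K → ker v
  set α₀ : K →ₗ[O] (N ⧸ pN) := pN.mkQ ∘ₗ K.subtype with hα₀
  have hmemα : ∀ n : K, α₀ n ∈ LinearMap.ker v := by
    intro n
    rw [LinearMap.mem_ker, hα₀]
    simp only [LinearMap.comp_apply, Submodule.mkQ_apply]
    rw [hv, Submodule.mapQ_apply, Submodule.Quotient.mk_eq_zero]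
    exact n.2
  set α : K →ₗ[O] LinearMap.ker v := LinearMap.codRestrict _ α₀ hmemα with hα
  have hsurjα : Function.Surjective α := by
    rintro ⟨x, hx⟩
    rw [LinearMap.mem_ker] at hx
    obtain ⟨n, rfl⟩ := Submodule.mkQ_surjective pN x
    rw [hv, Submodule.mkQ_apply, Submodule.mapQ_apply, Submodule.Quotient.mk_eq_zero] at hx
    refine ⟨⟨n, hx⟩, Subtype.ext ?_⟩
    rfl
  -- kernels of α and β agree
  have hkerα : LinearMap.ker α = pN.comap K.subtype := by
    rw [hα, LinearMap.ker_codRestrict, hα₀, LinearMap.ker_comp, Submodule.ker_mkQ]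
  have hkerβ : LinearMap.ker β = pN.comap K.subtype := by
    rw [hβ, LinearMap.ker_codRestrict]
    ext n
    rw [LinearMap.mem_ker, Submodule.mem_comap]
    constructor
    · intro h
      obtain ⟨m, hm⟩ := existsm n
      rw [keyβ n m hm, hπ, Submodule.mkQ_apply, Submodule.Quotient.mk_eq_zero] at h
      obtain ⟨n', hn'⟩ := h
      have : u (ϖ ^ s • n') = u n.1 := by
        rw [map_smul, hn']
        exact hm ▸ rfl
      have hn : (n : N) = ϖ ^ s • n' := (hu this).symm
      rw [Submodule.coe_subtype, hn, hrangeN]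
      exact ⟨n', rfl⟩
    · intro h
      rw [Submodule.coe_subtype, hrangeN] at h
      obtain ⟨n', hn'⟩ := h
      have hm : φ (u n') = u n.1 := by
        rw [hφ]
        show ϖ ^ s • u n' = u n.1
        rw [← map_smul]
        exact congrArg u hn'
      rw [keyβ n (u n') hm, hπ, Submodule.mkQ_apply, Submodule.Quotient.mk_eq_zero]
      exact ⟨n', rfl⟩
  -- assemble
  have e3 : ↥(LinearMap.ker v) ≃ₗ[O] ↥(Submodule.torsionBy O C (ϖ ^ s)) :=
    ((LinearMap.quotKerEquivOfSurjective α hsurjα).symm.trans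
      (Submodule.quotEquivOfEq _ _ (hkerα.trans hkerβ.symm))).trans
      (LinearMap.quotKerEquivOfSurjective β hsurjβ)
  exact ⟨e1.trans ((e2.trans e3).symm)⟩
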